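/- For all integers r ≥ 1, k ≥ 0, and m, one has D_r(m,k) ≥ D_r^{smp}(⌈m/(k+1)⌉, k): the daisy Ramsey number is at least the simple-daisy Ramsey number with universe of petals shrunk by a factor k+1. -/
import Mathlib


/-- The coloring `c` is monochromatic on the `r`-subsets of `S`. -/
def IsMonoOn (c : Finset ℕ → Bool) (r : ℕ) (S : Finset ℕ) : Prop :=
  ∃ col : Bool, ∀ P ⊆ S, P.card = r → c P = col

/-- `R_r(m)`: the least `N` such that every 2-coloring of the `r`-subsets of
`{1,…,N}` admits a monochromatic set of size `m`. -/
noncomputable def ramseyNumber (r m : ℕ) : ℕ :=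
  sInf {N : ℕ | ∀ c : Finset ℕ → Bool,
    ∃ S ⊆ Finset.Icc 1 N, S.card = m ∧ IsMonoOn c r S}

/-- The coloring `c` admits a monochromatic `(r,m,k)`-daisy inside `{1,…,N}`. -/
def HasMonoDaisy (r m k N : ℕ) (c : Finset ℕ → Bool) : Prop :=
  ∃ K M : Finset ℕ, K ∪ M ⊆ Finset.Icc 1 N ∧ Disjoint K M ∧
    K.card = k ∧ M.card = m ∧
    ∃ col : Bool, ∀ P ⊆ M, P.card = r → c (K ∪ P) = col

/-- `D_r(m,k)`: the daisy Ramsey number. -/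
noncomputable def daisyRamsey (r m k : ℕ) : ℕ :=
  sInf {N : ℕ | ∀ c : Finset ℕ → Bool, HasMonoDaisy r m k N c}

/-- The coloring `c` admits a monochromatic simple `(r,m,k)`-daisy inside `{1,…,N}`:
the kernel splits as `K₀ ∪ K₁` with `K₀ < M < K₁`. -/
def HasMonoSimpleDaisy (r m k N : ℕ) (c : Finset ℕ → Bool) : Prop :=
  ∃ K₀ M K₁ : Finset ℕ, K₀ ∪ M ∪ K₁ ⊆ Finset.Icc 1 N ∧
    (∀ x ∈ K₀, ∀ y ∈ M, x < y) ∧ (∀ y ∈ M, ∀ z ∈ K₁, y < z) ∧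
    (∀ x ∈ K₀, ∀ z ∈ K₁, x < z) ∧
    (K₀ ∪ K₁).card = k ∧ M.card = m ∧
    ∃ col : Bool, ∀ P ⊆ M, P.card = r → c (K₀ ∪ P ∪ K₁) = col

/-- `D_r^{smp}(m,k)`: the simple-daisy Ramsey number. -/
noncomputable def simpleDaisyRamsey (r m k : ℕ) : ℕ :=
  sInf {N : ℕ | ∀ c : Finset ℕ → Bool, HasMonoSimpleDaisy r m k N c}

/-- Finite hypergraph Ramsey theorem (2 colors), in a relabelling-free form:
for every uniformity `r` and target size `n` there is an `N` such that every
finite set `X` of naturals with at least `N` elements contains, for every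
coloring, a monochromatic subset of size `n`. -/
lemma ramsey_exists : ∀ r n : ℕ, ∃ N : ℕ, ∀ (X : Finset ℕ) (c : Finset ℕ → Bool),
    N ≤ X.card → ∃ S ⊆ X, S.card = n ∧ IsMonoOn c r S := by
  intro r
  induction r with
  | zero =>
    intro n
    refine ⟨n, fun X c hX => ?_⟩
    obtain ⟨S, hS, hcard⟩ := Finset.exists_subset_card_eq hX
    exact ⟨S, hS, hcard, ⟨c ∅, fun P _ hP => by rw [Finset.card_eq_zero.mp hP]⟩⟩
  | succ r IH =>
    -- build a pre-homogeneous sequence of length t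
    have inner : ∀ t : ℕ, ∃ N : ℕ, ∀ (X : Finset ℕ) (c : Finset ℕ → Bool), N ≤ X.card →
        ∃ s ⊆ X, s.card = t ∧ ∃ ε : ℕ → Bool,
          ∀ b ∈ s, ∀ P ⊆ s, P.card = r → (∀ x ∈ P, b < x) → c (insert b P) = ε b := by
      intro t
      induction t with
      | zero =>
        exact ⟨0, fun X c _ => ⟨∅, Finset.empty_subset X, rfl, fun _ => false, by simp⟩⟩
      | succ t iht =>
        obtain ⟨Nt, hNt⟩ := iht
        obtain ⟨M, hM⟩ := IH Nt
        refine ⟨M + 1, fun X c hX => ?_⟩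
        have hXne : X.Nonempty := Finset.card_pos.mp (by omega)
        set a := X.min' hXne with ha
        have haX : a ∈ X := X.min'_mem hXne
        have hcard : M ≤ (X.erase a).card := by
          rw [Finset.card_erase_of_mem haX]; omega
        obtain ⟨Y, hYX, hYcard, col, hcol⟩ := hM (X.erase a) (fun P => c (insert a P)) hcard
        obtain ⟨s, hsY, hscard, ε, hε⟩ := hNt Y c (le_of_eq hYcard.symm)
        have haY : a ∉ Y := fun h => (Finset.mem_erase.mp (hYX h)).1 rfl
        have has : a ∉ s := fun h => haY (hsY h)
        refine ⟨insert a s, ?_, ?_, fun b => if b = a then col else ε b, ?_⟩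
        · intro x hx
          rcases Finset.mem_insert.mp hx with h | h
          · exact h ▸ haX
          · exact Finset.mem_of_mem_erase (hYX (hsY h))
        · rw [Finset.card_insert_of_notMem has, hscard]
        · intro b hb P hP hPcard hlt
          rcases Finset.mem_insert.mp hb with rfl | hb
          · simp only [if_pos]
            refine hcol P (fun x hx => ?_) hPcard
            rcases Finset.mem_insert.mp (hP hx) with h | h
            · exact absurd (h ▸ hlt x hx) (lt_irrefl _)
            · exact hsY h
          · have hba : b ≠ a := fun h => has (h ▸ hb)
            have hab : a < b :=
              lt_of_le_of_ne (X.min'_le b (Finset.mem_of_mem_erase (hYX (hsY hb)))) (Ne.symm hba)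
            show c (insert b P) = if b = a then col else ε b
            rw [if_neg hba]
            refine hε b hb P (fun x hx => ?_) hPcard hlt
            rcases Finset.mem_insert.mp (hP hx) with h | h
            · exact absurd (h ▸ (hab.trans (hlt x hx))) (lt_irrefl _)
            · exact h
    intro n
    obtain ⟨N, hN⟩ := inner (2 * n)
    refine ⟨N, fun X c hX => ?_⟩
    obtain ⟨s, hsX, hscard, ε, hε⟩ := hN X c hX
    have hsplit : (s.filter (fun b => ε b = true)).card
        + (s.filter (fun b => ε b = false)).card = s.card := by
      have h := Finset.card_filter_add_card_filter_not (s := s)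
        (p := fun b => ε b = true)
      have h2 : s.filter (fun b => ¬ ε b = true) = s.filter (fun b => ε b = false) := by
        apply Finset.filter_congr
        intro b _
        simp [Bool.not_eq_true]
      rw [h2] at h
      exact h
    have hcases : ∃ col : Bool, n ≤ (s.filter (fun b => ε b = col)).card := by
      by_contra h
      push_neg at h
      have h1 := h true
      have h2 := h false
      omega
    obtain ⟨col, hcol⟩ := hcases
    obtain ⟨S, hSsub, hScard⟩ := Finset.exists_subset_card_eq hcol
    refine ⟨S, (hSsub.trans (Finset.filter_subset _ s)).trans hsX, hScard, col, ?_⟩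
    intro P hP hPcard
    have hPne : P.Nonempty := by rw [← Finset.card_pos, hPcard]; omega
    set b := P.min' hPne with hbdef
    have hbP : b ∈ P := P.min'_mem hPne
    have hbfil : b ∈ s.filter (fun b => ε b = col) := hSsub (hP hbP)
    have hbs : b ∈ s := (Finset.mem_filter.mp hbfil).1
    have hεb : ε b = col := (Finset.mem_filter.mp hbfil).2
    have h1 : insert b (P.erase b) = P := Finset.insert_erase hbP
    have h2 : (P.erase b).card = r := by
      rw [Finset.card_erase_of_mem hbP, hPcard]
      omega
    have h3 : P.erase b ⊆ s := fun x hx =>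
      (Finset.mem_filter.mp (hSsub (hP (Finset.mem_of_mem_erase hx)))).1
    have h4 : ∀ x ∈ P.erase b, b < x := fun x hx =>
      lt_of_le_of_ne (P.min'_le x (Finset.mem_of_mem_erase hx))
        (Ne.symm (Finset.mem_erase.mp hx).1)
    rw [← h1, hε b hbs _ h3 h2 h4, hεb]

/-- The set defining the daisy Ramsey number is nonempty. -/
lemma daisy_set_nonempty (r m k : ℕ) :
    ∃ N : ℕ, ∀ c : Finset ℕ → Bool, HasMonoDaisy r m k N c := by
  obtain ⟨N, hN⟩ := ramsey_exists (k + r) (k + m)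
  refine ⟨N, fun c => ?_⟩
  have hXcard : N ≤ (Finset.Icc 1 N).card := by rw [Nat.card_Icc]; omega
  obtain ⟨S, hS, hScard, col, hcol⟩ := hN (Finset.Icc 1 N) c hXcard
  obtain ⟨K, hKS, hKcard⟩ := Finset.exists_subset_card_eq
    (show k ≤ S.card by omega)
  refine ⟨K, S \ K, ?_, Finset.disjoint_sdiff, hKcard, ?_, col, ?_⟩
  · exact (Finset.union_subset hKS (Finset.sdiff_subset.trans (subset_refl S))).trans hS
  · rw [Finset.card_sdiff_of_subset hKS, hScard, hKcard]; omega
  · intro P hP hPcard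
    have hdisj : Disjoint K P :=
      Finset.disjoint_left.mpr fun x hxK hxP => (Finset.mem_sdiff.mp (hP hxP)).2 hxK
    refine hcol (K ∪ P) (Finset.union_subset hKS (hP.trans Finset.sdiff_subset)) ?_
    rw [Finset.card_union_of_disjoint hdisj, hKcard, hPcard]

/-- Reduction: a monochromatic daisy contains a monochromatic simple daisy with
petal set of size `⌈m/(k+1)⌉`. -/
lemma hasMonoSimpleDaisy_of_hasMonoDaisy (r k m N : ℕ) (hr : 1 ≤ r)
    (c : Finset ℕ → Bool) (h : HasMonoDaisy r m k N c) :
    HasMonoSimpleDaisy r ((m + k) / (k + 1)) k N c := by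
  obtain ⟨K, M, hsub, hdisj, hK, hM, col, hcol⟩ := h
  set m' := (m + k) / (k + 1) with hm'def
  by_cases hm' : m' = 0
  · refine ⟨K, ∅, ∅, ?_, by simp, by simp, by simp, by simp [hK], by simp [hm'], true, ?_⟩
    · simpa using (Finset.subset_union_left.trans hsub)
    · intro P hP hPcard
      have : P = ∅ := Finset.subset_empty.mp hP
      rw [this] at hPcard
      simp at hPcard
      omega
  · have hm'pos : 1 ≤ m' := Nat.pos_of_ne_zero hm'
    have key : m' * (k + 1) ≤ m + k := Nat.div_mul_le_self _ _
    have hmpos : 1 ≤ m := by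
      by_contra hm0
      have : m = 0 := by omega
      rw [this] at hm'def
      rw [hm'def, Nat.div_eq_of_lt (by omega)] at hm'pos
      omega
    have hmulsplit : (m' - 1) * (k + 1) + (k + 1) = m' * (k + 1) := by
      have hgen : ∀ a : ℕ, 1 ≤ a → (a - 1) * (k + 1) + (k + 1) = a * (k + 1) := by
        intro a ha
        obtain ⟨b, rfl⟩ : ∃ b, a = b + 1 := ⟨a - 1, by omega⟩
        simp only [Nat.add_sub_cancel]
        ring
      exact hgen m' hm'pos
    have hcard : (Finset.range (k + 1)).card * (m' - 1) < M.card := by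
      rw [Finset.card_range, hM, mul_comm]
      have h2 : (m' - 1) * (k + 1) + (k + 1) ≤ m + k := hmulsplit ▸ key
      linarith
    have maps : ∀ b ∈ M, (K.filter (· < b)).card ∈ Finset.range (k + 1) := fun b _ =>
      Finset.mem_range.mpr
        (Nat.lt_succ_of_le (le_of_le_of_eq (Finset.card_le_card (Finset.filter_subset _ K)) hK))
    obtain ⟨j, _, hjcard⟩ := Finset.exists_lt_card_fiber_of_mul_lt_card_of_maps_to maps hcard
    set M₀ := M.filter (fun b => (K.filter (· < b)).card = j) with hM₀def
    have hjcard' : m' ≤ M₀.card := by omega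
    obtain ⟨M', hM'sub, hM'card⟩ := Finset.exists_subset_card_eq hjcard'
    have hM'M : M' ⊆ M := hM'sub.trans (Finset.filter_subset _ _)
    have hM'ne : M'.Nonempty := Finset.card_pos.mp (by omega)
    set b₀ := M'.min' hM'ne with hb₀def
    have hb₀ : b₀ ∈ M' := M'.min'_mem hM'ne
    set K₀ := K.filter (· < b₀) with hK₀def
    set K₁ := K \ K₀ with hK₁def
    have hK₀K : K₀ ⊆ K := Finset.filter_subset _ _
    have hkey : ∀ y ∈ M', K.filter (· < y) = K₀ := by
      intro y hy
      have hb₀y : b₀ ≤ y := M'.min'_le y hy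
      have hsub2 : K₀ ⊆ K.filter (· < y) := fun x hx =>
        Finset.mem_filter.mpr ⟨(Finset.mem_filter.mp hx).1,
          lt_of_lt_of_le (Finset.mem_filter.mp hx).2 hb₀y⟩
      have hcy : (K.filter (· < y)).card = j := (Finset.mem_filter.mp (hM'sub hy)).2
      have hcb : K₀.card = j := (Finset.mem_filter.mp (hM'sub hb₀)).2
      exact (Finset.eq_of_subset_of_card_le hsub2 (by omega)).symm
    refine ⟨K₀, M', K₁, ?_, ?_, ?_, ?_, ?_, hM'card, col, ?_⟩
    · refine Finset.Subset.trans ?_ hsub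
      exact Finset.union_subset
        (Finset.union_subset (hK₀K.trans Finset.subset_union_left)
          (hM'M.trans Finset.subset_union_right))
        ((Finset.sdiff_subset).trans Finset.subset_union_left)
    · intro x hx y hy
      have hx' : x ∈ K.filter (· < y) := by rw [hkey y hy]; exact hx
      exact (Finset.mem_filter.mp hx').2
    · intro y hy z hz
      have hzK := Finset.mem_sdiff.mp hz
      have hnlt : ¬ z < y := fun hlt =>
        hzK.2 (by rw [← hkey y hy]; exact Finset.mem_filter.mpr ⟨hzK.1, hlt⟩)
      have hne : y ≠ z := fun h =>
        (Finset.disjoint_left.mp hdisj hzK.1) (h ▸ hM'M hy)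
      omega
    · intro x hx z hz
      have hx' : x < b₀ := (Finset.mem_filter.mp hx).2
      have hzK := Finset.mem_sdiff.mp hz
      have hnlt : ¬ z < b₀ := fun hlt => hzK.2 (Finset.mem_filter.mpr ⟨hzK.1, hlt⟩)
      omega
    · rw [hK₁def, Finset.union_sdiff_of_subset hK₀K, hK]
    · intro P hP hPcard
      have heq : K₀ ∪ P ∪ K₁ = K ∪ P := by
        rw [Finset.union_right_comm, hK₁def, Finset.union_sdiff_of_subset hK₀K]
      rw [heq]
      exact hcol P (hP.trans hM'M) hPcard

/-- For all integers `r ≥ 1`, `k ≥ 0`, `m`: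
`D_r(m,k) ≥ D_r^{smp}(⌈m/(k+1)⌉, k)` (here `⌈m/(k+1)⌉ = (m+k)/(k+1)` in `ℕ`). -/
theorem simpleDaisyRamsey_le_daisyRamsey (r k m : ℕ) (hr : 1 ≤ r) :
    simpleDaisyRamsey r ((m + k) / (k + 1)) k ≤ daisyRamsey r m k := by
  obtain ⟨N₀, hN₀⟩ := daisy_set_nonempty r m k
  have hmem : daisyRamsey r m k ∈ {N : ℕ | ∀ c : Finset ℕ → Bool, HasMonoDaisy r m k N c} :=
    Nat.sInf_mem ⟨N₀, hN₀⟩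
  exact Nat.sInf_le fun c =>
    hasMonoSimpleDaisy_of_hasMonoDaisy r k m _ hr c (hmem c)
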